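/- Let P be a finite poset on n elements such that the minimum vertex cover of its comparability graph has size at least (1 − α)n, for a constant α ∈ (0,1) with αn a positive integer. Then the number of antichains of P is at most (1 + 1/α)^{αn}. -/

import Mathlib

open Real

section DilworthHelpers

open Finset

variable {V : Type*} [PartialOrder V] [DecidableEq V]

open Classical in
lemma dilworth_aux (S : Finset V) :
    ∀ k : ℕ, (∀ A : Finset V, A ⊆ S → IsAntichain (· ≤ ·) (A : Set V) → A.card ≤ k) →
    ∃ C : Fin k → Finset V, (∀ i, IsChain (· ≤ ·) ((C i : Set V))) ∧
      (∀ i, C i ⊆ S) ∧ (∀ x ∈ S, ∃ i, x ∈ C i) ∧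
      Pairwise (Function.onFun Disjoint C) := by
  induction S using Finset.strongInduction with
  | _ S IH =>
  intro k hk
  rcases S.eq_empty_or_nonempty with rfl | hS
  · exact ⟨fun _ => ∅, by simp [IsChain, Set.Pairwise], by simp, by simp,
      fun i j _ => by simp [Function.onFun]⟩
  obtain ⟨a, haS, hamax⟩ := S.exists_maximal hS
  set S' := S.erase a with hS'
  have hS'sub : S' ⊂ S := Finset.erase_ssubset haS
  set 𝒜 := (S'.powerset).filter (fun A => IsAntichain (· ≤ ·) ((A : Finset V) : Set V)) with h𝒜
  have hem : (∅ : Finset V) ∈ 𝒜 := by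
    simp only [h𝒜, mem_filter, mem_powerset]
    exact ⟨empty_subset _, by simp [IsAntichain, Set.Pairwise]⟩
  set w := 𝒜.sup Finset.card with hw
  have hwle : ∀ A : Finset V, A ⊆ S' → IsAntichain (· ≤ ·) (A : Set V) → A.card ≤ w :=
    fun A hA hAc => Finset.le_sup (by simp only [h𝒜, mem_filter, mem_powerset]; exact ⟨hA, hAc⟩)
  obtain ⟨A₀, hA₀mem, hA₀card⟩ := Finset.exists_mem_eq_sup 𝒜 ⟨∅, hem⟩ Finset.card
  obtain ⟨D, hDchain, hDsub, hDcov, hDdisj⟩ := IH S' hS'sub w hwle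
  have hmem𝒜 : ∀ A : Finset V, A ∈ 𝒜 ↔ A ⊆ S' ∧ IsAntichain (· ≤ ·) (A : Set V) := by
    intro A; simp only [h𝒜, mem_filter, mem_powerset]
  -- every w-antichain meets each chain in exactly one element
  have hone : ∀ A ∈ 𝒜, A.card = w → ∀ i : Fin w, (A ∩ D i).card = 1 := by
    intro A hA hcard i
    rw [hmem𝒜] at hA
    have hsub1 : ∀ j, (A ∩ D j).card ≤ 1 := by
      intro j
      rw [Finset.card_le_one]
      intro x hx y hy
      rcases eq_or_ne x y with h | h
      · exact h
      · rcases hDchain j (by exact_mod_cast (mem_inter.mp hx).2)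
          (by exact_mod_cast (mem_inter.mp hy).2) h with hle | hle
        · exact absurd hle (hA.2 (by exact_mod_cast (mem_inter.mp hx).1)
            (by exact_mod_cast (mem_inter.mp hy).1) h)
        · exact absurd hle (hA.2 (by exact_mod_cast (mem_inter.mp hy).1)
            (by exact_mod_cast (mem_inter.mp hx).1) h.symm)
    have hAeq : A = Finset.univ.biUnion (fun j : Fin w => A ∩ D j) := by
      ext x
      simp only [mem_biUnion, mem_univ, true_and, mem_inter]
      constructor
      · intro hx
        obtain ⟨j, hj⟩ := hDcov x (hA.1 hx)
        exact ⟨j, hx, hj⟩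
      · rintro ⟨j, hj, -⟩; exact hj
    have hdis : ∀ x ∈ (univ : Finset (Fin w)), ∀ y ∈ univ, x ≠ y →
        Disjoint (A ∩ D x) (A ∩ D y) := by
      intro x _ y _ hxy
      exact Finset.disjoint_of_subset_left (inter_subset_right)
        (Finset.disjoint_of_subset_right (inter_subset_right) (hDdisj hxy))
    have hsum : ∑ j : Fin w, (A ∩ D j).card = w := by
      rw [← Finset.card_biUnion hdis, ← hAeq, hcard]
    by_contra hne
    have hlt : (A ∩ D i).card = 0 := by have := hsub1 i; omega
    have : ∑ j : Fin w, (A ∩ D j).card < ∑ _j : Fin w, 1 := by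
      apply Finset.sum_lt_sum (fun j _ => hsub1 j)
      exact ⟨i, mem_univ i, by omega⟩
    simp at this
    omega
  -- the top elements of chains among maximum antichains
  set T : Fin w → Finset V := fun i => (D i).filter (fun x => ∃ B ∈ 𝒜, B.card = w ∧ x ∈ B) with hT
  have hTne : ∀ i, (T i).Nonempty := by
    intro i
    have := hone A₀ hA₀mem hA₀card.symm i
    obtain ⟨x, hx⟩ := Finset.card_eq_one.mp this
    refine ⟨x, ?_⟩
    have hxm : x ∈ A₀ ∩ D i := hx ▸ mem_singleton_self x
    simp only [hT, mem_filter]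
    exact ⟨(mem_inter.mp hxm).2, A₀, hA₀mem, hA₀card.symm, (mem_inter.mp hxm).1⟩
  have hTmax : ∀ i, ∃ m ∈ T i, ∀ x ∈ T i, x ≤ m := by
    intro i
    obtain ⟨m, hm, hmax⟩ := (T i).exists_maximal (hTne i)
    refine ⟨m, hm, fun x hx => ?_⟩
    rcases eq_or_ne x m with rfl | h
    · exact le_refl x
    · rcases hDchain i (by exact_mod_cast mem_of_mem_filter x hx)
        (by exact_mod_cast mem_of_mem_filter m hm) h with hle | hle
      · exact hle
      · exact hmax hx hle
  choose f hfmem hfmax using hTmax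
  have hfD : ∀ i, f i ∈ D i := fun i => mem_of_mem_filter _ (hfmem i)
  have hincomp : ∀ i j : Fin w, i ≠ j → ¬ f i ≤ f j := by
    intro i j hij hle
    obtain ⟨-, B, hB𝒜, hBcard, hfB⟩ := mem_filter.mp (hfmem j)
    have h1 := hone B hB𝒜 hBcard i
    obtain ⟨x, hx⟩ := Finset.card_eq_one.mp h1
    have hxm : x ∈ B ∩ D i := hx ▸ mem_singleton_self x
    have hxT : x ∈ T i := by
      simp only [hT, mem_filter]
      exact ⟨(mem_inter.mp hxm).2, B, hB𝒜, hBcard, (mem_inter.mp hxm).1⟩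
    have hxfj : x ≤ f j := le_trans (hfmax i x hxT) hle
    have hBanti := ((hmem𝒜 B).mp hB𝒜).2
    rcases eq_or_ne x (f j) with rfl | h
    · exact (Finset.disjoint_left.mp (hDdisj hij) (mem_inter.mp hxm).2) (hfD j)
    · exact hBanti (by exact_mod_cast (mem_inter.mp hxm).1) (by exact_mod_cast hfB) h hxfj
  have hfS' : ∀ i, f i ∈ S' := fun i => hDsub i (hfD i)
  have hnotlt : ∀ i, ¬ a ≤ f i := by
    intro i hle
    have : a ≠ f i := by
      intro h
      have h2 := hfS' i
      rw [← h] at h2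
      exact Finset.notMem_erase a S h2
    exact this (le_antisymm hle (hamax (mem_of_mem_erase (hfS' i)) hle))
  by_cases hcase : ∃ i : Fin w, f i ≤ a
  · -- chain through a
    obtain ⟨i, hia⟩ := hcase
    set E : Finset V := insert a ((D i).filter (· ≤ f i)) with hE
    have haE : a ∈ E := mem_insert_self a _
    have hEchain : IsChain (· ≤ ·) (E : Set V) := by
      intro x hx y hy hxy
      simp only [hE, coe_insert, Set.mem_insert_iff, mem_coe, mem_filter] at hx hy
      rcases hx with rfl | ⟨hxD, hxle⟩
      · rcases hy with rfl | ⟨hyD, hyle⟩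
        · exact absurd rfl hxy
        · exact Or.inr (le_trans hyle hia)
      · rcases hy with rfl | ⟨hyD, hyle⟩
        · exact Or.inl (le_trans hxle hia)
        · exact hDchain i (by exact_mod_cast hxD) (by exact_mod_cast hyD) hxy
    have hEsub : E ⊆ S := by
      intro x hx
      rcases mem_insert.mp hx with rfl | hx
      · exact haS
      · exact hS'sub.1 (hDsub i (mem_of_mem_filter x hx))
    have hk1 : 1 ≤ k := by
      have := hk {a} (by simpa using haS) (by simp [IsAntichain, Set.Pairwise])
      simpa using this
    obtain ⟨k', rfl⟩ : ∃ k', k = k' + 1 := ⟨k - 1, by omega⟩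
    set S₂ := S \ E with hS₂
    have hS₂sub : S₂ ⊂ S := by
      constructor
      · exact sdiff_subset
      · intro h
        exact (mem_sdiff.mp (h haS)).2 haE
    have hbound : ∀ A : Finset V, A ⊆ S₂ → IsAntichain (· ≤ ·) (A : Set V) → A.card ≤ k' := by
      intro A hA hAanti
      have hAS' : A ⊆ S' := by
        intro x hx
        have hxS := (mem_sdiff.mp (hA hx)).1
        have hxE := (mem_sdiff.mp (hA hx)).2
        exact mem_erase.mpr ⟨fun h => hxE (h ▸ haE), hxS⟩
      have hAw : A.card ≤ w := hwle A hAS' hAanti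
      have hwk : w ≤ k' + 1 := by
        rw [hw, hA₀card]
        exact hk A₀ (fun x hx => hS'sub.1 (((hmem𝒜 A₀).mp hA₀mem).1 hx)) ((hmem𝒜 A₀).mp hA₀mem).2
      rcases lt_or_eq_of_le hAw with h | h
      · omega
      · exfalso
        have hA𝒜 : A ∈ 𝒜 := (hmem𝒜 A).mpr ⟨hAS', hAanti⟩
        have h1 := hone A hA𝒜 h i
        obtain ⟨x, hx⟩ := Finset.card_eq_one.mp h1
        have hxm : x ∈ A ∩ D i := hx ▸ mem_singleton_self x
        have hxT : x ∈ T i := by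
          simp only [hT, mem_filter]
          exact ⟨(mem_inter.mp hxm).2, A, hA𝒜, h, (mem_inter.mp hxm).1⟩
        have hxE : x ∈ E := mem_insert_of_mem (mem_filter.mpr ⟨(mem_inter.mp hxm).2, hfmax i x hxT⟩)
        exact (mem_sdiff.mp (hA (mem_inter.mp hxm).1)).2 hxE
    obtain ⟨D₂, hD₂chain, hD₂sub, hD₂cov, hD₂disj⟩ := IH S₂ hS₂sub k' hbound
    have hdisjE : ∀ j, Disjoint E (D₂ j) := by
      intro j
      rw [Finset.disjoint_right]
      intro x hx
      exact (mem_sdiff.mp (hD₂sub j hx)).2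
    refine ⟨Fin.cons E D₂, ?_, ?_, ?_, ?_⟩
    · intro p
      refine Fin.cases ?_ ?_ p
      · simpa using hEchain
      · intro j; simpa using hD₂chain j
    · intro p
      refine Fin.cases ?_ ?_ p
      · simpa using hEsub
      · intro j; simpa using (hD₂sub j).trans hS₂sub.1
    · intro x hx
      by_cases hxE : x ∈ E
      · exact ⟨0, by simpa using hxE⟩
      · obtain ⟨j, hj⟩ := hD₂cov x (mem_sdiff.mpr ⟨hx, hxE⟩)
        exact ⟨j.succ, by simpa using hj⟩
    · intro p q
      refine Fin.cases ?_ ?_ p <;> [skip; intro p'] <;> refine Fin.cases ?_ ?_ q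
      · intro h; exact absurd rfl h
      · intro q' _
        simpa [Function.onFun] using hdisjE q'
      · intro _
        simpa [Function.onFun] using (hdisjE p').symm
      · intro q' hne
        have : p' ≠ q' := fun h => hne (by rw [h])
        simpa [Function.onFun] using hD₂disj this
  · -- extend antichain by a
    push_neg at hcase
    have hfinj : Function.Injective f := by
      intro i j h
      by_contra hij
      exact (Finset.disjoint_left.mp (hDdisj hij) (hfD i)) (h ▸ hfD j)
    set A' : Finset V := insert a (Finset.univ.image f) with hA'
    have haim : a ∉ Finset.univ.image f := by
      simp only [mem_image, mem_univ, true_and]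
      rintro ⟨i, hi⟩
      have h2 := hfS' i
      rw [hi] at h2
      exact Finset.notMem_erase a S h2
    have hA'card : A'.card = w + 1 := by
      rw [hA', Finset.card_insert_of_notMem haim, Finset.card_image_of_injective _ hfinj]
      simp
    have hA'anti : IsAntichain (· ≤ ·) (A' : Set V) := by
      intro x hx y hy hxy hle
      simp only [hA', coe_insert, Set.mem_insert_iff, mem_coe, mem_image, mem_univ, true_and] at hx hy
      rcases hx with rfl | ⟨i, rfl⟩
      · rcases hy with rfl | ⟨j, rfl⟩
        · exact hxy rfl
        · exact hnotlt j hle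
      · rcases hy with rfl | ⟨j, rfl⟩
        · exact hcase i hle
        · have : i ≠ j := fun h => hxy (by rw [h])
          exact hincomp i j this hle
    have hA'S : A' ⊆ S := by
      intro x hx
      rcases mem_insert.mp hx with rfl | hx
      · exact haS
      · obtain ⟨i, -, rfl⟩ := mem_image.mp hx
        exact hS'sub.1 (hfS' i)
    have hwk : w + 1 ≤ k := by
      rw [← hA'card]
      exact hk A' hA'S hA'anti
    refine ⟨fun p => if h : (p : ℕ) < w then D ⟨p, h⟩ else if (p : ℕ) = w then {a} else ∅,
      ?_, ?_, ?_, ?_⟩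
    · intro p
      dsimp only
      split_ifs with h1 h2
      · exact hDchain _
      · simp [IsChain, Set.Pairwise]
      · simp [IsChain, Set.Pairwise]
    · intro p
      dsimp only
      split_ifs with h1 h2
      · exact (hDsub _).trans hS'sub.1
      · simpa using haS
      · simp
    · intro x hx
      rcases eq_or_ne x a with rfl | hxa
      · refine ⟨⟨w, by omega⟩, ?_⟩
        dsimp only
        split_ifs with h1
        · exact absurd h1 (lt_irrefl w)
        · exact mem_singleton_self x
      · obtain ⟨i, hi⟩ := hDcov x (mem_erase.mpr ⟨hxa, hx⟩)
        refine ⟨⟨(i : ℕ), by omega⟩, ?_⟩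
        dsimp only
        split_ifs with h1 h2
        · exact hi
        · exact absurd i.2 h1
        · exact absurd i.2 h1
    · intro p q hpq
      have hval : (p : ℕ) ≠ (q : ℕ) := fun h => hpq (Fin.ext h)
      simp only [Function.onFun]
      split_ifs with h1 h2 h3 h4 h5 h6 h7 h8
      all_goals first
        | exact hDdisj (Fin.ne_of_val_ne hval)
        | omega
        | (refine Finset.disjoint_singleton_right.mpr ?_
           exact fun hmem => Finset.notMem_erase _ S (hDsub _ hmem))
        | (refine Finset.disjoint_singleton_left.mpr ?_
           exact fun hmem => Finset.notMem_erase _ S (hDsub _ hmem))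
        | exact Finset.disjoint_empty_left _
        | exact Finset.disjoint_empty_right _

lemma small_sets_eq (s : Finset V) :
    (s.powerset.filter (fun B => B.card ≤ 1)) = insert ∅ (s.image fun a => {a}) := by
  ext B
  simp only [mem_filter, mem_powerset, mem_insert, mem_image]
  constructor
  · rintro ⟨hBs, hB1⟩
    rcases Nat.le_one_iff_eq_zero_or_eq_one.mp hB1 with h | h
    · exact Or.inl (Finset.card_eq_zero.mp h)
    · obtain ⟨a, rfl⟩ := Finset.card_eq_one.mp h
      exact Or.inr ⟨a, hBs (mem_singleton_self a), rfl⟩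
  · rintro (rfl | ⟨a, ha, rfl⟩)
    · simp
    · simp [Finset.singleton_subset_iff, ha]

lemma small_sets_card (s : Finset V) :
    (s.powerset.filter (fun B => B.card ≤ 1)).card = s.card + 1 := by
  rw [small_sets_eq]
  rw [Finset.card_insert_of_notMem (by simp)]
  rw [Finset.card_image_of_injective _ (fun a b h => Finset.singleton_injective h)]

open Classical in
lemma antichain_count_le_prod [Fintype V] {k : ℕ} (C : Fin k → Finset V)
    (hchain : ∀ i, IsChain (· ≤ ·) ((C i : Set V)))
    (hcov : ∀ x : V, ∃ i, x ∈ C i) :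
    (Finset.univ.filter (fun A : Finset V => IsAntichain (· ≤ ·) (A : Set V))).card
      ≤ ∏ i, ((C i).card + 1) := by
  refine le_trans (Finset.card_le_card_of_injOn
      (t := Fintype.piFinset fun i => (C i).powerset.filter fun B => B.card ≤ 1)
      (fun A : Finset V => fun i : Fin k => A ∩ C i) ?_ ?_) ?_
  · intro A hA
    rw [Finset.mem_coe, Finset.mem_filter] at hA
    rw [Finset.mem_coe, Fintype.mem_piFinset]
    intro i
    rw [Finset.mem_filter, Finset.mem_powerset]
    refine ⟨inter_subset_right, ?_⟩
    rw [Finset.card_le_one]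
    intro x hx y hy
    rcases eq_or_ne x y with h | h
    · exact h
    · rcases hchain i (by exact_mod_cast (mem_inter.mp hx).2)
        (by exact_mod_cast (mem_inter.mp hy).2) h with hle' | hle'
      · exact absurd hle' (hA.2 (by exact_mod_cast (mem_inter.mp hx).1)
          (by exact_mod_cast (mem_inter.mp hy).1) h)
      · exact absurd hle' (hA.2 (by exact_mod_cast (mem_inter.mp hy).1)
          (by exact_mod_cast (mem_inter.mp hx).1) h.symm)
  · intro A _ B _ heq
    ext x
    obtain ⟨i, hi⟩ := hcov x
    have h : A ∩ C i = B ∩ C i := congrFun heq i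
    constructor
    · intro hx
      have : x ∈ A ∩ C i := mem_inter.mpr ⟨hx, hi⟩
      rw [h] at this
      exact (mem_inter.mp this).1
    · intro hx
      have : x ∈ B ∩ C i := mem_inter.mpr ⟨hx, hi⟩
      rw [← h] at this
      exact (mem_inter.mp this).1
  · rw [Fintype.card_piFinset]
    exact le_of_eq (Finset.prod_congr rfl (fun i _ => small_sets_card (C i)))

lemma prod_le_avg_pow {k : ℕ} (hk : 0 < k) (z : Fin k → ℝ) (hz : ∀ i, 0 ≤ z i) :
    ∏ i, z i ≤ ((∑ i, z i) / k) ^ k := by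
  have hkR : (0 : ℝ) < k := by exact_mod_cast hk
  have hw : ∑ _i : Fin k, (1 / k : ℝ) = 1 := by
    rw [Finset.sum_const, Finset.card_univ, Fintype.card_fin, nsmul_eq_mul]
    field_simp
  have h := Real.geom_mean_le_arith_mean_weighted Finset.univ (fun _ => (1 / k : ℝ)) z
    (fun i _ => by positivity) hw (fun i _ => hz i)
  have hprod : ∏ i, z i ^ (1 / (k : ℝ)) = (∏ i, z i) ^ (1 / (k : ℝ)) := by
    rw [← Real.finset_prod_rpow _ _ (fun i _ => hz i)]
  rw [hprod] at h
  have hsum : ∑ i, (1 / (k : ℝ)) * z i = (∑ i, z i) / k := by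
    rw [← Finset.mul_sum]
    ring
  rw [hsum] at h
  have hP : (0 : ℝ) ≤ ∏ i, z i := Finset.prod_nonneg (fun i _ => hz i)
  have h2 := pow_le_pow_left₀ (by positivity) h k
  rwa [← Real.rpow_natCast ((∏ i, z i) ^ (1 / (k : ℝ))) k, ← Real.rpow_mul hP,
    one_div, inv_mul_cancel₀ (ne_of_gt hkR), Real.rpow_one] at h2


end DilworthHelpers

section MainProof

open Finset

/-- If every vertex cover of the comparability graph of an `n`-element poset
has size at least `(1-α)n` (with `α ∈ (0,1)` and `αn` a positive integer),
then the number of antichains is at most `(1+1/α)^{αn}`. -/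
theorem antichain_count_of_large_vertexCover
    {V : Type*} [PartialOrder V] [Fintype V] [DecidableEq V]
    (α : ℝ) (hα0 : 0 < α) (hα1 : α < 1)
    (hint : ∃ k : ℕ, 0 < k ∧ (k : ℝ) = α * (Fintype.card V : ℝ))
    (hvc : ∀ C : Finset V,
      (∀ u v : V, u ≠ v → (u < v ∨ v < u) → u ∈ C ∨ v ∈ C) →
      (1 - α) * (Fintype.card V : ℝ) ≤ (C.card : ℝ)) :
    ({A : Finset V | IsAntichain (· ≤ ·) (A : Set V)}.ncard : ℝ) ≤
      (1 + 1 / α) ^ (α * (Fintype.card V : ℝ)) := by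
  classical
  obtain ⟨k, hk0, hk⟩ := hint
  set n := Fintype.card V with hn
  have hn0 : 0 < n := by
    rcases Nat.eq_zero_or_pos n with h | h
    · rw [h] at hk
      simp at hk
      omega
    · exact h
  have hnR : (0 : ℝ) < n := by exact_mod_cast hn0
  have hkR : (0 : ℝ) < k := by exact_mod_cast hk0
  -- every antichain has at most k elements
  have hbound : ∀ A : Finset V, A ⊆ Finset.univ → IsAntichain (· ≤ ·) (A : Set V) →
      A.card ≤ k := by
    intro A _ hA
    have hcover : ∀ u v : V, u ≠ v → (u < v ∨ v < u) →
        u ∈ Finset.univ \ A ∨ v ∈ Finset.univ \ A := by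
      intro u v huv hcomp
      by_contra h
      push_neg at h
      have hu : u ∈ A := by simpa using h.1
      have hv : v ∈ A := by simpa using h.2
      rcases hcomp with h' | h'
      · exact hA (by exact_mod_cast hu) (by exact_mod_cast hv) huv h'.le
      · exact hA (by exact_mod_cast hv) (by exact_mod_cast hu) huv.symm h'.le
    have h1 := hvc (Finset.univ \ A) hcover
    have hcard : ((Finset.univ \ A).card : ℝ) = (n : ℝ) - A.card := by
      rw [Finset.card_sdiff_of_subset (Finset.subset_univ A), Finset.card_univ, ← hn]
      have : A.card ≤ n := le_trans (Finset.card_le_card (Finset.subset_univ A))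
        (le_of_eq Finset.card_univ)
      push_cast [Nat.cast_sub this]
      ring
    rw [hcard] at h1
    have : (A.card : ℝ) ≤ k := by rw [hk]; nlinarith
    exact_mod_cast this
  obtain ⟨C, hchain, hsub, hcov, hdisj⟩ := dilworth_aux (Finset.univ : Finset V) k hbound
  -- total size of the chains
  have huniv : Finset.univ = Finset.univ.biUnion C := by
    ext x
    simpa using hcov x (Finset.mem_univ x)
  have hsum : ∑ i, (C i).card = n := by
    rw [hn, ← Finset.card_univ, huniv, Finset.card_biUnion]
    intro x _ y _ hxy
    exact hdisj hxy
  -- counting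
  have hcount := antichain_count_le_prod C hchain (fun x => hcov x (Finset.mem_univ x))
  -- identify the ncard with the filter card
  have hset : {A : Finset V | IsAntichain (· ≤ ·) (A : Set V)} =
      ↑(Finset.univ.filter (fun A : Finset V => IsAntichain (· ≤ ·) (A : Set V))) := by
    ext A
    simp
  rw [hset, Set.ncard_coe_finset]
  -- AM-GM
  have hAM := prod_le_avg_pow hk0 (fun i => ((C i).card : ℝ) + 1) (fun i => by positivity)
  have hsumR : ∑ i, (((C i).card : ℝ) + 1) = (n : ℝ) + k := by
    rw [Finset.sum_add_distrib]
    simp only [Finset.sum_const, Finset.card_univ, Fintype.card_fin, nsmul_eq_mul, mul_one]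
    rw [← Nat.cast_sum, hsum]
  rw [hsumR] at hAM
  have havg : ((n : ℝ) + k) / k = 1 + 1 / α := by
    have hα : α = k / n := by field_simp [hk]; exact hk.symm
    rw [hα]
    field_simp
    ring
  rw [havg] at hAM
  have hrhs : (1 + 1 / α) ^ (α * (n : ℝ)) = (1 + 1 / α) ^ (k : ℕ) := by
    rw [← hk, Real.rpow_natCast]
  rw [hrhs]
  calc ((Finset.univ.filter (fun A : Finset V => IsAntichain (· ≤ ·) (A : Set V))).card : ℝ)
      ≤ ((∏ i, ((C i).card + 1) : ℕ) : ℝ) := by exact_mod_cast hcount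
    _ = ∏ i, (((C i).card : ℝ) + 1) := by push_cast; rfl
    _ ≤ (1 + 1 / α) ^ (k : ℕ) := hAM

end MainProof
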